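/- Let λ : ℕ → ℝ be a sequence with λ_n ≥ λ̄ > 0 for all n, let T > 0, and let γ be a parameter with 0 < γ < 2·exp(λ̄² T). The diagonal operator D_p on ℓ²(ℕ, ℝ) defined by (D_p x)_n = (1 − γ·exp(−λ_n² T)) · x_n is a bounded self-adjoint linear operator which is non-expansive (‖D_p‖ ≤ 1), 1 is not an eigenvalue of D_p, and D_p is asymptotically regular. If moreover γ < exp(λ̄² T) (equivalently γ < 2·exp(λ̃² T) with λ̃² = λ̄² − T⁻¹ ln 2), then all multipliers 1 − γ·exp(−λ_n² T) lie in (0,1), D_p is injective, and D_p satisfies ‖(I − D_p)x‖² ≤ ‖x‖² − ‖D_p x‖² for all x ∈ ℓ². -/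

import Mathlib

open Filter ENNReal

noncomputable section Stmt11Aux

local notation "H" => lp (fun _ : ℕ => ℝ) 2

private lemma rpow_two' (x : ℝ) : x ^ ((2:ℝ≥0∞).toReal) = x ^ 2 := by
  rw [show ((2:ℝ≥0∞).toReal) = ((2:ℕ):ℝ) by norm_num, Real.rpow_natCast]

private lemma hasSum_sq (f : H) : HasSum (fun n => (f n) ^ 2) (‖f‖ ^ 2) := by
  have h2 : (0:ℝ) < (2 : ℝ≥0∞).toReal := by norm_num
  have h := lp.hasSum_norm h2 f
  simpa [rpow_two', Real.norm_eq_abs, sq_abs] using h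

private lemma diag_mem (a : ℕ → ℝ) (ha : ∀ n, |a n| ≤ 1) (x : H) :
    Memℓp (fun n => a n * x n) 2 := by
  have h2 : (0:ℝ) < (2 : ℝ≥0∞).toReal := by norm_num
  rw [memℓp_gen_iff h2]
  simp only [rpow_two', Real.norm_eq_abs]
  refine Summable.of_nonneg_of_le (fun n => by positivity) (fun n => ?_)
    (hasSum_sq x).summable
  rw [abs_mul]
  calc (|a n| * |x n|) ^ 2 ≤ (1 * |x n|) ^ 2 := by
        apply pow_le_pow_left₀ (by positivity)
        exact mul_le_mul_of_nonneg_right (ha n) (abs_nonneg _)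
    _ = (x n)^2 := by rw [one_mul, sq_abs]

private def diagL (a : ℕ → ℝ) (ha : ∀ n, |a n| ≤ 1) : H →ₗ[ℝ] H where
  toFun x := ⟨fun n => a n * x n, diag_mem a ha x⟩
  map_add' x y := by
    ext n
    simp only [lp.coeFn_add, Pi.add_apply, AddSubgroup.coe_add]
    exact mul_add _ _ _
  map_smul' c x := by
    ext n
    simp [lp.coeFn_smul]
    ring

private lemma diagL_apply (a : ℕ → ℝ) (ha : ∀ n, |a n| ≤ 1) (x : H) (n : ℕ) :
    (diagL a ha x) n = a n * x n := rfl

private lemma diagL_norm (a : ℕ → ℝ) (ha : ∀ n, |a n| ≤ 1) (x : H) :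
    ‖diagL a ha x‖ ≤ ‖x‖ := by
  have h1 := hasSum_sq (diagL a ha x)
  have h2 := hasSum_sq x
  have hle : ‖diagL a ha x‖ ^ 2 ≤ ‖x‖ ^ 2 := by
    refine hasSum_le (fun n => ?_) h1 h2
    rw [diagL_apply, mul_pow]
    calc (a n)^2 * (x n)^2 ≤ 1 * (x n)^2 := by
          apply mul_le_mul_of_nonneg_right _ (by positivity)
          calc (a n)^2 = |a n|^2 := (sq_abs _).symm
            _ ≤ 1^2 := pow_le_pow_left₀ (abs_nonneg _) (ha n) 2
            _ = 1 := one_pow 2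
      _ = (x n)^2 := one_mul _
  exact (pow_le_pow_iff_left₀ (norm_nonneg _) (norm_nonneg _) (by norm_num)).mp hle

private def diag (a : ℕ → ℝ) (ha : ∀ n, |a n| ≤ 1) : H →L[ℝ] H :=
  LinearMap.mkContinuous (diagL a ha) 1 (fun x => by simpa using diagL_norm a ha x)

private lemma diag_apply (a : ℕ → ℝ) (ha : ∀ n, |a n| ≤ 1) (x : H) (n : ℕ) :
    (diag a ha x) n = a n * x n := rfl


private lemma diag_pow_apply (a : ℕ → ℝ) (ha : ∀ n, |a n| ≤ 1) (k : ℕ) (x : H) (n : ℕ) :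
    ((diag a ha ^ k) x) n = a n ^ k * x n := by
  induction k with
  | zero => simp
  | succ k ih =>
    rw [pow_succ', ContinuousLinearMap.mul_apply, diag_apply, ih, pow_succ]
    ring

private lemma diag_symm (a : ℕ → ℝ) (ha : ∀ n, |a n| ≤ 1) : IsSelfAdjoint (diag a ha) := by
  rw [ContinuousLinearMap.isSelfAdjoint_iff_isSymmetric]
  intro x y
  rw [lp.inner_eq_tsum, lp.inner_eq_tsum]
  refine tsum_congr fun n => ?_
  simp only [RCLike.inner_apply, starRingEnd_apply, star_trivial]
  show y n * (a n * x n) = (a n * y n) * x n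
  ring

private lemma diag_asymp (a : ℕ → ℝ) (ha : ∀ n, |a n| < 1) (ha1 : ∀ n, |a n| ≤ 1) (x : H) :
    Tendsto (fun k : ℕ => ‖(diag a ha1 ^ (k + 1)) x - (diag a ha1 ^ k) x‖) atTop (nhds 0) := by
  set g : ℕ → H := fun k => (diag a ha1 ^ (k + 1)) x - (diag a ha1 ^ k) x with hg
  have hco : ∀ k n, (g k) n = (a n ^ (k+1) - a n ^ k) * x n := by
    intro k n
    have : (g k) n = ((diag a ha1 ^ (k + 1)) x) n - ((diag a ha1 ^ k) x) n := by
      rw [hg]; exact congrFun (lp.coeFn_sub _ _) n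
    rw [this, diag_pow_apply, diag_pow_apply, sub_mul]
  have hsq : Tendsto (fun k : ℕ => ‖g k‖ ^ 2) atTop (nhds 0) := by
    have key : Tendsto (fun k : ℕ => ∑' n, ((a n ^ (k+1) - a n ^ k) * x n) ^ 2)
        atTop (nhds (∑' n : ℕ, (0:ℝ))) := by
      apply tendsto_tsum_of_dominated_convergence
        (bound := fun n => 4 * (x n) ^ 2)
      · exact (hasSum_sq x).summable.mul_left 4
      · intro n
        have h1 : Tendsto (fun k : ℕ => a n ^ k) atTop (nhds 0) :=
          tendsto_pow_atTop_nhds_zero_of_abs_lt_one (ha n)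
        have h2 : Tendsto (fun k : ℕ => a n ^ (k+1)) atTop (nhds 0) :=
          h1.comp (tendsto_add_atTop_nat 1)
        have := (((h2.sub h1).mul_const (x n)).pow 2)
        simpa using this
      · filter_upwards with k
        intro n
        have hb : |a n ^ (k+1) - a n ^ k| ≤ 2 := by
          have h1 : |a n ^ (k+1)| ≤ 1 := by
            rw [abs_pow]; exact pow_le_one₀ (abs_nonneg _) (ha n).le
          have h2 : |a n ^ k| ≤ 1 := by
            rw [abs_pow]; exact pow_le_one₀ (abs_nonneg _) (ha n).le
          calc |a n ^ (k+1) - a n ^ k| ≤ |a n ^ (k+1)| + |a n ^ k| := abs_sub _ _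
            _ ≤ 2 := by linarith
        have : ‖((a n ^ (k+1) - a n ^ k) * x n) ^ 2‖ = ((a n ^ (k+1) - a n ^ k) * x n) ^ 2 := by
          rw [Real.norm_eq_abs, abs_of_nonneg (by positivity)]
        rw [this, mul_pow]
        have : (a n ^ (k+1) - a n ^ k) ^ 2 ≤ 4 := by
          have := sq_abs (a n ^ (k+1) - a n ^ k)
          nlinarith [abs_nonneg (a n ^ (k+1) - a n ^ k)]
        nlinarith [sq_nonneg (x n), sq_nonneg (a n ^ (k+1) - a n ^ k)]
    rw [tsum_zero] at key
    convert key using 2 with k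
    rw [← (hasSum_sq (g k)).tsum_eq]
    exact tsum_congr fun n => by rw [hco]
  have := (Real.continuous_sqrt.tendsto 0).comp hsq
  simp only [Real.sqrt_zero] at this
  convert this using 2 with k
  simp [Function.comp, Real.sqrt_sq (norm_nonneg _)]
  simp [hg]


private lemma diag_norm_le (a : ℕ → ℝ) (ha : ∀ n, |a n| ≤ 1) : ‖diag a ha‖ ≤ 1 :=
  LinearMap.mkContinuous_norm_le _ zero_le_one _

end Stmt11Aux

theorem stmt_11 (lam : ℕ → ℝ) (lambar : ℝ) (hlamb : 0 < lambar)
    (hlam : ∀ n, lambar ≤ lam n) (T γ : ℝ) (hT : 0 < T)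
    (hγpos : 0 < γ) (hγ : γ < 2 * Real.exp (lambar ^ 2 * T)) :
    ∃ D : lp (fun _ : ℕ => ℝ) 2 →L[ℝ] lp (fun _ : ℕ => ℝ) 2,
      (∀ (x : lp (fun _ : ℕ => ℝ) 2) (n : ℕ),
        D x n = (1 - γ * Real.exp (-(lam n ^ 2 * T))) * x n) ∧
      IsSelfAdjoint D ∧
      ‖D‖ ≤ 1 ∧
      LinearMap.ker (((1 : lp (fun _ : ℕ => ℝ) 2 →L[ℝ] lp (fun _ : ℕ => ℝ) 2) - D :
        lp (fun _ : ℕ => ℝ) 2 →L[ℝ] lp (fun _ : ℕ => ℝ) 2) : lp (fun _ : ℕ => ℝ) 2 →ₗ[ℝ] lp (fun _ : ℕ => ℝ) 2) = ⊥ ∧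
      (∀ x : lp (fun _ : ℕ => ℝ) 2,
        Tendsto (fun k : ℕ => ‖(D ^ (k + 1)) x - (D ^ k) x‖) atTop (nhds 0)) ∧
      (γ < 2 * Real.exp ((lambar ^ 2 - T⁻¹ * Real.log 2) * T) →
        (∀ n, 1 - γ * Real.exp (-(lam n ^ 2 * T)) ∈ Set.Ioo (0 : ℝ) 1) ∧
        Function.Injective D ∧
        ∀ x : lp (fun _ : ℕ => ℝ) 2, ‖x - D x‖ ^ 2 ≤ ‖x‖ ^ 2 - ‖D x‖ ^ 2) := by
  set a : ℕ → ℝ := fun n => 1 - γ * Real.exp (-(lam n ^ 2 * T)) with ha_def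
  have hlamsq : ∀ n, lambar ^ 2 * T ≤ lam n ^ 2 * T := fun n =>
    mul_le_mul_of_nonneg_right (pow_le_pow_left₀ hlamb.le (hlam n) 2) hT.le
  have hexle : ∀ n, Real.exp (lambar ^ 2 * T) ≤ Real.exp (lam n ^ 2 * T) := fun n =>
    Real.exp_le_exp.mpr (hlamsq n)
  have hprod : ∀ n, Real.exp (lam n ^ 2 * T) * Real.exp (-(lam n ^ 2 * T)) = 1 := fun n => by
    rw [← Real.exp_add]; simp
  have hlt1 : ∀ n, a n < 1 := fun n => by
    have h := mul_pos hγpos (Real.exp_pos (-(lam n ^ 2 * T)))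
    simp only [ha_def]; linarith
  have hgt : ∀ n, -1 < a n := fun n => by
    have h1 : γ * Real.exp (-(lam n ^ 2 * T)) < 2 := by
      have hep := Real.exp_pos (lambar ^ 2 * T)
      have h2 : γ < 2 * Real.exp (lam n ^ 2 * T) := lt_of_lt_of_le hγ (by nlinarith [hexle n])
      calc γ * Real.exp (-(lam n ^ 2 * T))
          < (2 * Real.exp (lam n ^ 2 * T)) * Real.exp (-(lam n ^ 2 * T)) :=
            mul_lt_mul_of_pos_right h2 (Real.exp_pos _)
        _ = 2 := by rw [mul_assoc, hprod n, mul_one]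
    simp only [ha_def]; linarith
  have habs : ∀ n, |a n| < 1 := fun n => abs_lt.mpr ⟨hgt n, hlt1 n⟩
  have ha1 : ∀ n, |a n| ≤ 1 := fun n => (habs n).le
  refine ⟨diag a ha1, fun x n => diag_apply a ha1 x n, diag_symm a ha1,
    diag_norm_le a ha1, ?_, diag_asymp a habs ha1, ?_⟩
  · rw [LinearMap.ker_eq_bot']
    intro x hx
    simp only [ContinuousLinearMap.coe_coe] at hx
    have h0 : ∀ n, (x : ℕ → ℝ) n = 0 := by
      intro n
      have hcoe := congrFun (congrArg (fun f : lp (fun _ : ℕ => ℝ) 2 => (f : ℕ → ℝ)) hx) n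
      have hsub : (((1 : lp (fun _ : ℕ => ℝ) 2 →L[ℝ] lp (fun _ : ℕ => ℝ) 2) - diag a ha1) x)
          = x - diag a ha1 x := by
        rw [ContinuousLinearMap.sub_apply, ContinuousLinearMap.one_apply]
      rw [hsub] at hcoe
      simp only at hcoe
      have hcd := congrFun (lp.coeFn_sub x (diag a ha1 x)) n
      rw [hcd] at hcoe
      have hdn : ((diag a ha1 x : lp (fun _ : ℕ => ℝ) 2) : ℕ → ℝ) n = a n * x n := rfl
      rw [Pi.sub_apply, hdn] at hcoe
      have hne : (1 : ℝ) - a n ≠ 0 := by have := hlt1 n; intro h; linarith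
      have : (1 - a n) * x n = 0 := by
        have h0n : ((0 : lp (fun _ : ℕ => ℝ) 2) : ℕ → ℝ) n = 0 := rfl
        rw [h0n] at hcoe; linarith [hcoe]
      exact (mul_eq_zero.mp this).resolve_left hne
    apply lp.ext
    funext n
    rw [h0 n]; simp [lp.coeFn_zero]
  · intro hγ2
    have hγ' : γ < Real.exp (lambar ^ 2 * T) := by
      have heq : (lambar ^ 2 - T⁻¹ * Real.log 2) * T = lambar ^ 2 * T - Real.log 2 := by
        field_simp
      rw [heq, Real.exp_sub, Real.exp_log two_pos] at hγ2
      linarith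
    have hIoo : ∀ n, a n ∈ Set.Ioo (0 : ℝ) 1 := by
      intro n
      refine ⟨?_, hlt1 n⟩
      have hlt : γ * Real.exp (-(lam n ^ 2 * T)) < 1 := by
        calc γ * Real.exp (-(lam n ^ 2 * T))
            < Real.exp (lam n ^ 2 * T) * Real.exp (-(lam n ^ 2 * T)) :=
              mul_lt_mul_of_pos_right (lt_of_lt_of_le hγ' (hexle n)) (Real.exp_pos _)
          _ = 1 := hprod n
      simp only [ha_def]; linarith
    refine ⟨hIoo, ?_, ?_⟩
    · intro x y hxy
      apply lp.ext
      funext n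
      have hcoe := congrFun (congrArg (fun f : lp (fun _ : ℕ => ℝ) 2 => (f : ℕ → ℝ)) hxy) n
      have h2 : a n * x n = a n * y n := hcoe
      exact mul_left_cancel₀ (ne_of_gt (hIoo n).1) h2
    · intro x
      have h1 := hasSum_sq (x - diag a ha1 x)
      have h2 := (hasSum_sq x).sub (hasSum_sq (diag a ha1 x))
      have key : ‖x - diag a ha1 x‖ ^ 2 ≤ ‖x‖ ^ 2 - ‖diag a ha1 x‖ ^ 2 := by
        refine hasSum_le (fun n => ?_) h1 h2
        have hxn : ((x - diag a ha1 x : lp (fun _ : ℕ => ℝ) 2) : ℕ → ℝ) n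
            = (1 - a n) * x n := by
          rw [congrFun (lp.coeFn_sub x (diag a ha1 x)) n, Pi.sub_apply]
          show x n - a n * x n = _
          ring
        rw [hxn]
        have hdn : ((diag a ha1 x : lp (fun _ : ℕ => ℝ) 2) : ℕ → ℝ) n = a n * x n := rfl
        rw [hdn]
        obtain ⟨hp0, hp1⟩ := hIoo n
        nlinarith [sq_nonneg (x n)]
      exact key
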